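/- arXiv:1512.09035 — 2 statements merged into one kernel-verified Lean document; each statement's English description precedes it below -/
import Mathlib

section
/- Let p be the step distribution of an irreducible random walk on ℤ^d with finite support V. Let F be a facet of the convex hull of V, i.e., F = conv{v ∈ V : ⟨λ, v⟩ = c} for some unit vector λ ∈ ℝ^d and c ∈ ℝ with ⟨λ, v⟩ ≤ c for all v ∈ V. Then for every v ∈ V \ F and every sequence (δ_k) in M converging to a point of ∂M ∩ F, one has e^{⟨s(δ_k), v⟩} / κ(s(δ_k)) → 0 as k → ∞. -/
/- Framework for random walks on the integer lattice ℤ^d. -/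

noncomputable section

namespace RWalk

/-- `ℝ^d` with the Euclidean norm. -/
abbrev E (d : ℕ) : Type := EuclideanSpace ℝ (Fin d)

/-- The embedding of `ℤ^d` into `ℝ^d`. -/
def emb {d : ℕ} (x : Fin d → ℤ) : E d := WithLp.toLp 2 (fun i => (x i : ℝ))

/-- The bilinear pairing `⟨x, y⟩ = ∑ i, x i * y i` on `ℝ^d`. -/
def pairR {d : ℕ} (x y : E d) : ℝ := ∑ i, x i * y i

/-- The ℓ¹-norm on `ℝ^d`. -/
def l1 {d : ℕ} (x : E d) : ℝ := ∑ i, |x i|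

/-- The `n`-step transition function of the walk with step distribution `p`:
`tfun p 0 = δ₀`, hence `tfun p 1 = p` and
`tfun p (n+1) x = ∑ y, tfun p n y * p (x - y)`. -/
def tfun {d : ℕ} (p : (Fin d → ℤ) → ℝ) : ℕ → (Fin d → ℤ) → ℝ
  | 0, x => if x = 0 then 1 else 0
  | n + 1, x => ∑ᶠ y : Fin d → ℤ, tfun p n y * p (x - y)

/-- `κ(x) = ∑_{v ∈ V} p(v) e^{⟨x,v⟩}`. -/
def kappa {d : ℕ} (p : (Fin d → ℤ) → ℝ) (x : E d) : ℝ :=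
  ∑ᶠ v : Fin d → ℤ, p v * Real.exp (pairR x (emb v))

/-- `log κ`. -/
def logKappa {d : ℕ} (p : (Fin d → ℤ) → ℝ) : E d → ℝ := fun x => Real.log (kappa p x)

/-- `φ(δ) = sup_{x ∈ ℝ^d} (⟨x,δ⟩ - log κ(x))`. -/
def phi {d : ℕ} (p : (Fin d → ℤ) → ℝ) (δ : E d) : ℝ :=
  sSup (Set.range fun x : E d => pairR x δ - logKappa p x)

/-- `M`, the interior of the convex hull of the support `V` of `p`. -/
def Mset {d : ℕ} (p : (Fin d → ℤ) → ℝ) : Set (E d) :=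
  interior (convexHull ℝ (emb '' Function.support p))

/-- The Hessian matrix of `f` at `x`. -/
def hessMat {d : ℕ} (f : E d → ℝ) (x : E d) : Matrix (Fin d) (Fin d) ℝ :=
  fun i j => fderiv ℝ (fun y => fderiv ℝ f y (EuclideanSpace.single j 1)) x
      (EuclideanSpace.single i 1)

/-- The quadratic form `u ↦ uᵀ A u` of a matrix `A`. -/
def quadForm {d : ℕ} (A : Matrix (Fin d) (Fin d) ℝ) (u : E d) : ℝ :=
  ∑ i, ∑ j, u i * A i j * u j

/-- The second directional derivative `D_u² f(x)`. -/
def D2 {d : ℕ} (f : E d → ℝ) (x u : E d) : ℝ :=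
  iteratedDeriv 2 (fun t : ℝ => f (x + t • u)) 0

/-- Irreducibility: for every `x ∈ ℤ^d` there is `n ∈ ℕ` with `p(n; x) > 0`. -/
def Irred {d : ℕ} (p : (Fin d → ℤ) → ℝ) : Prop :=
  ∀ x : Fin d → ℤ, ∃ n : ℕ, 0 < n ∧ 0 < tfun p n x

/-- The step distribution of the simple random walk on `ℤ^d`. -/
def srw (d : ℕ) (v : Fin d → ℤ) : ℝ :=
  if (∑ i, (v i).natAbs) = 1 then (2 * (d : ℝ))⁻¹ else 0

lemma pairR_eq_inner {d : ℕ} (x y : E d) : pairR x y = inner ℝ x y := by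
  simp [pairR, PiLp.inner_apply, RCLike.inner_apply, mul_comm]

lemma kappa_eq {d : ℕ} (p : (Fin d → ℤ) → ℝ) (hfin : (Function.support p).Finite) (x : E d) :
    kappa p x = ∑ w ∈ hfin.toFinset, p w * Real.exp (pairR x (emb w)) := by
  apply finsum_eq_sum_of_support_subset
  intro w hw
  simp only [Function.mem_support] at hw ⊢
  simp only [Set.Finite.coe_toFinset, Function.mem_support]
  intro h; exact hw (by simp [h])

lemma kappa_pos {d : ℕ} (p : (Fin d → ℤ) → ℝ) (hp : ∀ v, 0 ≤ p v)
    (hfin : (Function.support p).Finite) (hsum : ∑ᶠ v, p v = 1) (x : E d) :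
    0 < kappa p x := by
  obtain ⟨w0, hw0⟩ : (Function.support p).Nonempty := by
    by_contra h
    rw [Set.not_nonempty_iff_eq_empty] at h
    rw [finsum_eq_sum p hfin] at hsum
    simp [h] at hsum
  rw [kappa_eq p hfin x]
  apply Finset.sum_pos'
  · intro w _; exact mul_nonneg (hp w) (Real.exp_pos _).le
  · exact ⟨w0, hfin.mem_toFinset.2 hw0, by
      have := (Function.mem_support.1 hw0)
      have h1 : 0 < p w0 := lt_of_le_of_ne (hp w0) (Ne.symm this)
      positivity⟩

lemma hasFDerivAt_kappa {d : ℕ} (p : (Fin d → ℤ) → ℝ) (hfin : (Function.support p).Finite)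
    (x : E d) :
    HasFDerivAt (kappa p)
      (∑ w ∈ hfin.toFinset, (p w * Real.exp (pairR x (emb w))) • (innerSL ℝ (emb w))) x := by
  have hk : kappa p = fun y => ∑ w ∈ hfin.toFinset, p w * Real.exp (pairR y (emb w)) :=
    funext fun y => kappa_eq p hfin y
  rw [hk]
  apply HasFDerivAt.fun_sum
  intro w _
  have h1 : HasFDerivAt (fun y : E d => pairR y (emb w)) (innerSL ℝ (emb w)) x := by
    have heq : (fun y : E d => pairR y (emb w)) = fun y => (innerSL ℝ (emb w)) y := by
      funext y
      simp [pairR_eq_inner, real_inner_comm, mul_comm]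
    rw [heq]
    exact (innerSL ℝ (emb w)).hasFDerivAt
  have h2 := h1.exp
  have h3 := h2.const_mul (p w)
  rw [smul_smul] at h3
  exact h3

lemma inner_grad_logKappa {d : ℕ} (p : (Fin d → ℤ) → ℝ) (hp : ∀ v, 0 ≤ p v)
    (hfin : (Function.support p).Finite) (hsum : ∑ᶠ v, p v = 1) (x y : E d) :
    (inner ℝ (gradient (logKappa p) x) y : ℝ) =
      (kappa p x)⁻¹ * ∑ w ∈ hfin.toFinset, p w * Real.exp (pairR x (emb w)) * pairR y (emb w) := by
  have hκ := kappa_pos p hp hfin hsum x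
  have hD := (hasFDerivAt_kappa p hfin x).log hκ.ne'
  have hfd : fderiv ℝ (logKappa p) x = (kappa p x)⁻¹ •
      (∑ w ∈ hfin.toFinset, (p w * Real.exp (pairR x (emb w))) • (innerSL ℝ (emb w))) :=
    hD.fderiv
  rw [gradient, hfd, InnerProductSpace.toDual_symm_apply]
  simp only [ContinuousLinearMap.smul_apply, ContinuousLinearMap.sum_apply,
    ContinuousLinearMap.coe_smul', Pi.smul_apply, innerSL_apply_apply, smul_eq_mul]
  congr 1

/-- If `F` is a facet of the convex hull of `V` (cut out by the supporting unit functional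
`lam` at level `c`), `v ∈ V \ F`, and `δ_k ∈ M` converges to a point of `∂M ∩ F`, then
`e^{⟨s(δ_k), v⟩} / κ(s(δ_k)) → 0`. -/
theorem statement14 (d : ℕ) (p : (Fin d → ℤ) → ℝ) (hp : ∀ v, 0 ≤ p v)
    (hfin : (Function.support p).Finite) (hsum : ∑ᶠ v, p v = 1) (hirr : Irred p)
    (lam : E d) (hlam : ‖lam‖ = 1) (c : ℝ)
    (hc : ∀ v ∈ Function.support p, pairR lam (emb v) ≤ c)
    (F : Set (E d))
    (hF : F = convexHull ℝ
      (emb '' {v : Fin d → ℤ | v ∈ Function.support p ∧ pairR lam (emb v) = c}))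
    (v : Fin d → ℤ) (hv : v ∈ Function.support p) (hvF : emb v ∉ F)
    (δseq : ℕ → E d) (hδ : ∀ k, δseq k ∈ Mset p)
    (δlim : E d) (hlim : δlim ∈ frontier (Mset p) ∩ F)
    (hconv : Filter.Tendsto δseq Filter.atTop (nhds δlim))
    (s : ℕ → E d) (hs : ∀ k, gradient (logKappa p) (s k) = δseq k) :
    Filter.Tendsto (fun k => Real.exp (pairR (s k) (emb v)) / kappa p (s k))
      Filter.atTop (nhds 0) := by
  classical
  set V := hfin.toFinset with hV
  have hκpos : ∀ k, 0 < kappa p (s k) := fun k => kappa_pos p hp hfin hsum (s k)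
  have hFsub : F ⊆ {x : E d | pairR lam x = c} := by
    rw [hF]
    apply convexHull_min
    · rintro x ⟨w, ⟨hw1, hw2⟩, rfl⟩
      exact hw2
    · have hset : {x : E d | pairR lam x = c} = (innerSL ℝ lam).toLinearMap ⁻¹' {c} := by
        ext x
        simp [pairR_eq_inner]
      rw [hset]
      exact (convex_singleton c).linear_preimage _
  have hδc : pairR lam δlim = c := hFsub hlim.2
  have hvc : pairR lam (emb v) < c := by
    rcases lt_or_eq_of_le (hc v hv) with h | h
    · exact h
    · exact absurd (by rw [hF]; exact subset_convexHull ℝ _ ⟨v, ⟨hv, h⟩, rfl⟩) hvF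
  have hεpos : 0 < c - pairR lam (emb v) := sub_pos.2 hvc
  set ε := c - pairR lam (emb v) with hε
  have hpv : 0 < p v := lt_of_le_of_ne (hp v) (Ne.symm hv)
  have key : ∀ k, c - pairR lam (δseq k) =
      (kappa p (s k))⁻¹ *
        ∑ w ∈ V, p w * Real.exp (pairR (s k) (emb w)) * (c - pairR lam (emb w)) := by
    intro k
    have h1 : pairR lam (δseq k) = (kappa p (s k))⁻¹ *
        ∑ w ∈ V, p w * Real.exp (pairR (s k) (emb w)) * pairR lam (emb w) := by
      rw [pairR_eq_inner, ← hs k, real_inner_comm]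
      exact inner_grad_logKappa p hp hfin hsum (s k) lam
    have h2 : (kappa p (s k))⁻¹ * ∑ w ∈ V, p w * Real.exp (pairR (s k) (emb w)) * c = c := by
      rw [← Finset.sum_mul, ← kappa_eq p hfin, inv_mul_cancel_left₀ (hκpos k).ne']
    have h3 : ∑ w ∈ V, p w * Real.exp (pairR (s k) (emb w)) * (c - pairR lam (emb w))
        = (∑ w ∈ V, p w * Real.exp (pairR (s k) (emb w)) * c)
          - ∑ w ∈ V, p w * Real.exp (pairR (s k) (emb w)) * pairR lam (emb w) := by
      rw [← Finset.sum_sub_distrib]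
      apply Finset.sum_congr rfl
      intros; ring
    rw [h1, h3, mul_sub, h2]
  have hbound : ∀ k, Real.exp (pairR (s k) (emb v)) / kappa p (s k)
      ≤ (c - pairR lam (δseq k)) / (p v * ε) := by
    intro k
    have hκ := hκpos k
    have hterm : p v * Real.exp (pairR (s k) (emb v)) * ε ≤
        ∑ w ∈ V, p w * Real.exp (pairR (s k) (emb w)) * (c - pairR lam (emb w)) := by
      apply Finset.single_le_sum
        (f := fun w => p w * Real.exp (pairR (s k) (emb w)) * (c - pairR lam (emb w)))
      · intro w hw
        have h4 : 0 ≤ c - pairR lam (emb w) := sub_nonneg.2 (hc w (hfin.mem_toFinset.1 hw))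
        exact mul_nonneg (mul_nonneg (hp w) (Real.exp_pos _).le) h4
      · exact hfin.mem_toFinset.2 hv
    rw [key k, div_le_div_iff₀ hκ (by positivity)]
    calc Real.exp (pairR (s k) (emb v)) * (p v * ε)
        = p v * Real.exp (pairR (s k) (emb v)) * ε := by ring
      _ ≤ ∑ w ∈ V, p w * Real.exp (pairR (s k) (emb w)) * (c - pairR lam (emb w)) := hterm
      _ = (kappa p (s k))⁻¹ *
            (∑ w ∈ V, p w * Real.exp (pairR (s k) (emb w)) * (c - pairR lam (emb w))) *
            kappa p (s k) := by
          field_simp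
  have hnn : ∀ k, 0 ≤ Real.exp (pairR (s k) (emb v)) / kappa p (s k) := by
    intro k
    have := hκpos k
    positivity
  have hcont : Filter.Tendsto (fun k => pairR lam (δseq k)) Filter.atTop (nhds c) := by
    have h5 : Filter.Tendsto (fun k => (inner ℝ lam (δseq k) : ℝ)) Filter.atTop
        (nhds (inner ℝ lam δlim : ℝ)) :=
      ((innerSL ℝ lam).continuous.tendsto δlim).comp hconv
    have h6 : (inner ℝ lam δlim : ℝ) = c := by rw [← pairR_eq_inner, hδc]
    rw [← h6]
    simpa [pairR_eq_inner] using h5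
  have hg : Filter.Tendsto (fun k => (c - pairR lam (δseq k)) / (p v * ε)) Filter.atTop
      (nhds 0) := by
    have h7 := (tendsto_const_nhds (x := c) (f := Filter.atTop (α := ℕ))).sub hcont
    simpa using h7.div_const (p v * ε)
  exact squeeze_zero hnn hbound hg


end RWalk
end
end

section
/- Let p be the step distribution of an irreducible random walk on ℤ^d with finite support V. Then for all n ∈ ℕ and all x ∈ ℤ^d with δ = x/n ∈ M, one has p(n; x) ≤ e^{−n φ(δ)}. -/
/- Framework for random walks on the integer lattice ℤ^d. -/

noncomputable section

namespace RWalk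

lemma pairR_emb_add {d : ℕ} (θ : E d) (a b : Fin d → ℤ) :
    pairR θ (emb (a + b)) = pairR θ (emb a) + pairR θ (emb b) := by
  simp only [pairR, emb, ← Finset.sum_add_distrib]
  refine Finset.sum_congr rfl fun i _ => ?_
  have : ((a + b) i : ℝ) = (a i : ℝ) + (b i : ℝ) := by simp
  rw [this]; ring

lemma pairR_emb_zero {d : ℕ} (θ : E d) : pairR θ (emb (0 : Fin d → ℤ)) = 0 := by
  simp [pairR, emb]

lemma pairR_smul {d : ℕ} (θ : E d) (c : ℝ) (v : E d) :
    pairR θ (c • v) = c * pairR θ v := by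
  simp [pairR, Finset.mul_sum]
  refine Finset.sum_congr rfl fun i _ => by ring

lemma tfun_nonneg {d : ℕ} (p : (Fin d → ℤ) → ℝ) (hp : ∀ v, 0 ≤ p v) :
    ∀ n x, 0 ≤ tfun p n x := by
  intro n
  induction n with
  | zero => intro x; simp only [tfun]; split <;> norm_num
  | succ n ih =>
    intro x
    exact finsum_nonneg fun y => mul_nonneg (ih y) (hp _)

lemma tfun_support_finite {d : ℕ} (p : (Fin d → ℤ) → ℝ)
    (hfin : (Function.support p).Finite) :
    ∀ n, (Function.support (tfun p n)).Finite := by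
  intro n
  induction n with
  | zero =>
    refine Set.Finite.subset (Set.finite_singleton 0) fun x hx => ?_
    simp only [Function.mem_support, tfun] at hx
    by_contra h; exact hx (if_neg h)
  | succ n ih =>
    refine Set.Finite.subset (Set.Finite.image2 (· + ·) ih hfin) fun x hx => ?_
    simp only [Function.mem_support, tfun] at hx
    obtain ⟨y, hy⟩ : ∃ y, tfun p n y * p (x - y) ≠ 0 := by
      by_contra h; push_neg at h
      exact hx (finsum_eq_zero_of_forall_eq_zero h)
    have h1 : tfun p n y ≠ 0 := fun h => hy (by simp [h])
    have h2 : p (x - y) ≠ 0 := fun h => hy (by simp [h])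
    exact ⟨y, h1, x - y, h2, by ring⟩

lemma tfun_exp_sum {d : ℕ} (p : (Fin d → ℤ) → ℝ) (hp : ∀ v, 0 ≤ p v)
    (hfin : (Function.support p).Finite) (θ : E d) :
    ∀ n, ∑ᶠ x, tfun p n x * Real.exp (pairR θ (emb x)) = (kappa p θ) ^ n := by
  have hksupp : Function.support (fun v => p v * Real.exp (pairR θ (emb v))) ⊆
      Function.support p := fun v hv => by
    have : p v ≠ 0 := fun h => by simp [h] at hv
    exact this
  intro n
  induction n with
  | zero =>
    rw [finsum_eq_single _ 0 (fun x hx => by simp [tfun, hx])]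
    simp [tfun, pairR_emb_zero]
  | succ n ih =>
    classical
    set T := (tfun_support_finite p hfin n).toFinset with hT
    set X := (tfun_support_finite p hfin (n+1)).toFinset with hX
    have hXmem : ∀ x, tfun p (n+1) x ≠ 0 → x ∈ X := fun x hx => by
      rw [hX, Set.Finite.mem_toFinset]; exact hx
    have step1 : ∑ᶠ x, tfun p (n+1) x * Real.exp (pairR θ (emb x))
        = ∑ x ∈ X, tfun p (n+1) x * Real.exp (pairR θ (emb x)) := by
      apply finsum_eq_finset_sum_of_support_subset
      intro x hx
      refine hXmem x fun h => ?_
      simp [Function.mem_support, h] at hx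
    have step2 : ∀ x, tfun p (n+1) x = ∑ y ∈ T, tfun p n y * p (x - y) := by
      intro x
      simp only [tfun]
      apply finsum_eq_finset_sum_of_support_subset
      intro y hy
      have h1 : tfun p n y ≠ 0 := fun h => by simp [Function.mem_support, h] at hy
      exact Finset.mem_coe.mpr ((tfun_support_finite p hfin n).mem_toFinset.mpr h1)
    rw [step1]
    have main : ∑ x ∈ X, tfun p (n+1) x * Real.exp (pairR θ (emb x))
        = ∑ y ∈ T, tfun p n y * (Real.exp (pairR θ (emb y)) * kappa p θ) := by
      rw [Finset.sum_congr rfl (fun x _ => by rw [step2 x, Finset.sum_mul])]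
      rw [Finset.sum_comm]
      refine Finset.sum_congr rfl fun y hyT => ?_
      have hy0 : tfun p n y ≠ 0 := by
        rw [hT, Set.Finite.mem_toFinset] at hyT; exact hyT
      have hypos : 0 < tfun p n y := lt_of_le_of_ne (tfun_nonneg p hp n y) (Ne.symm hy0)
      have hpull : ∀ x, tfun p n y * p (x - y) * Real.exp (pairR θ (emb x))
          = tfun p n y * (p (x - y) * Real.exp (pairR θ (emb x))) := fun x => by ring
      simp_rw [hpull]
      rw [← Finset.mul_sum]
      congr 1
      have hsupp : Function.support (fun x => p (x - y) * Real.exp (pairR θ (emb x))) ⊆ ↑X := by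
        intro x hx
        have hpx : p (x - y) ≠ 0 := fun h => by simp [Function.mem_support, h] at hx
        have hppos : 0 < p (x - y) := lt_of_le_of_ne (hp _) (Ne.symm hpx)
        have hle : tfun p n y * p (x - y) ≤ tfun p (n+1) x := by
          simp only [tfun]
          apply single_le_finsum y
          · refine Set.Finite.subset (tfun_support_finite p hfin n) fun z hz => ?_
            exact fun h => by simp [Function.mem_support, h] at hz
          · intro j; exact mul_nonneg (tfun_nonneg p hp n j) (hp _)
        have hxpos : 0 < tfun p (n+1) x := lt_of_lt_of_le (by positivity) hle
        exact hXmem x (ne_of_gt hxpos)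
      rw [← finsum_eq_finset_sum_of_support_subset _ hsupp]
      rw [← finsum_comp_equiv (Equiv.addRight y)
        (f := fun x => p (x - y) * Real.exp (pairR θ (emb x)))]
      have hpt : ∀ v : Fin d → ℤ, p ((Equiv.addRight y) v - y)
            * Real.exp (pairR θ (emb ((Equiv.addRight y) v)))
          = Real.exp (pairR θ (emb y)) * (p v * Real.exp (pairR θ (emb v))) := by
        intro v
        have hvy : (Equiv.addRight y) v = v + y := rfl
        have hvy2 : v + y - y = v := by ring
        rw [hvy, pairR_emb_add, Real.exp_add, hvy2]; ring
      simp_rw [hpt]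
      rw [← mul_finsum _ _]
      rfl
    rw [main]
    have : ∀ y ∈ T, tfun p n y * (Real.exp (pairR θ (emb y)) * kappa p θ)
        = (tfun p n y * Real.exp (pairR θ (emb y))) * kappa p θ := fun y _ => by ring
    rw [Finset.sum_congr rfl this, ← Finset.sum_mul]
    have hTsum : ∑ y ∈ T, tfun p n y * Real.exp (pairR θ (emb y))
        = ∑ᶠ y, tfun p n y * Real.exp (pairR θ (emb y)) := by
      symm
      apply finsum_eq_finset_sum_of_support_subset
      intro y hy
      have : tfun p n y ≠ 0 := fun h => by simp [Function.mem_support, h] at hy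
      exact Finset.mem_coe.mpr ((tfun_support_finite p hfin n).mem_toFinset.mpr this)
    rw [hTsum, ih, pow_succ]

/-- Global upper bound: `p(n;x) ≤ e^{-n φ(x/n)}` whenever `x/n ∈ M`. -/
theorem statement19 (d : ℕ) (p : (Fin d → ℤ) → ℝ) (hp : ∀ v, 0 ≤ p v)
    (hfin : (Function.support p).Finite) (hsum : ∑ᶠ v, p v = 1) (hirr : Irred p) :
    ∀ n : ℕ, 0 < n → ∀ x : Fin d → ℤ, (n : ℝ)⁻¹ • emb x ∈ Mset p →
      tfun p n x ≤ Real.exp (-(n * phi p ((n : ℝ)⁻¹ • emb x))) := by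
  intro n hn x _hM
  have hnR : (0:ℝ) < n := by exact_mod_cast hn
  rcases eq_or_lt_of_le (tfun_nonneg p hp n x) with h0 | hpos
  · rw [← h0]; exact (Real.exp_pos _).le
  have hkpos : ∀ θ : E d, 0 < kappa p θ := by
    intro θ
    have hksupp : Function.support (fun v => p v * Real.exp (pairR θ (emb v))) ⊆
        Function.support p := fun v hv => by
      have : p v ≠ 0 := fun h => by simp [h] at hv
      exact this
    obtain ⟨v0, hv0⟩ : ∃ v0, p v0 ≠ 0 := by
      by_contra h; push_neg at h
      rw [finsum_eq_zero_of_forall_eq_zero h] at hsum; norm_num at hsum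
    have h1 : p v0 * Real.exp (pairR θ (emb v0)) ≤ kappa p θ := by
      apply single_le_finsum v0 (hfin.subset hksupp)
      intro j; exact mul_nonneg (hp j) (Real.exp_pos _).le
    have h2 : 0 < p v0 * Real.exp (pairR θ (emb v0)) :=
      mul_pos (lt_of_le_of_ne (hp v0) (Ne.symm hv0)) (Real.exp_pos _)
    linarith
  have hbound : ∀ θ : E d, pairR θ ((n : ℝ)⁻¹ • emb x) - logKappa p θ
      ≤ -(Real.log (tfun p n x)) / n := by
    intro θ
    have h1 : tfun p n x * Real.exp (pairR θ (emb x)) ≤ (kappa p θ) ^ n := by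
      rw [← tfun_exp_sum p hp hfin θ n]
      apply single_le_finsum x
      · refine Set.Finite.subset (tfun_support_finite p hfin n) fun z hz => ?_
        exact fun h => by simp [Function.mem_support, h] at hz
      · intro j; exact mul_nonneg (tfun_nonneg p hp n j) (Real.exp_pos _).le
    have h2 : Real.log (tfun p n x) + pairR θ (emb x) ≤ n * Real.log (kappa p θ) := by
      have h3 := Real.log_le_log (by positivity) h1
      rwa [Real.log_mul (ne_of_gt hpos) (Real.exp_pos _).ne', Real.log_exp,
        Real.log_pow] at h3
    rw [pairR_smul, logKappa, le_div_iff₀ hnR]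
    have h4 : ((n:ℝ)⁻¹ * pairR θ (emb x) - Real.log (kappa p θ)) * n
        = pairR θ (emb x) - n * Real.log (kappa p θ) := by field_simp
    rw [h4]; linarith
  have hsup : phi p ((n : ℝ)⁻¹ • emb x) ≤ -(Real.log (tfun p n x)) / n := by
    refine csSup_le (Set.range_nonempty _) ?_
    rintro r ⟨θ, rfl⟩; exact hbound θ
  calc tfun p n x = Real.exp (Real.log (tfun p n x)) := (Real.exp_log hpos).symm
    _ ≤ Real.exp (-(n * phi p ((n : ℝ)⁻¹ • emb x))) := by
        apply Real.exp_le_exp.2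
        have h5 := mul_le_mul_of_nonneg_left hsup (le_of_lt hnR)
        have h6 : (n:ℝ) * (-(Real.log (tfun p n x)) / n) = -Real.log (tfun p n x) := by
          field_simp
        rw [h6] at h5
        linarith


end RWalk
end
end
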